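/- arXiv:2007.09890 — 2 statements merged into one kernel-verified Lean document; each statement's English description precedes it below -/
import Mathlib

section
/- Let A ∈ ℝ^{n×d}, let k be a positive integer, let η ≥ 0, and let V ∈ ℝ^{d×m} have orthonormal columns such that ‖A(I − VVᵀ)‖₂² ≤ (η/k)·‖A − A_k‖_F². Then ‖A − A_k V Vᵀ‖_F² ≤ (1+η)·‖A − A_k‖_F². In particular, A_kVVᵀ is a matrix of rank at most k whose row space is contained in the column space of V (hence in row(SA) when V comes from an SVD of SA), achieving low-rank approximation error at most (1+η)‖A − A_k‖_F². -/
open Matrix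

/-- Squared Frobenius norm of a real matrix. -/
noncomputable def frobSq {m n : Type*} [Fintype m] [Fintype n] (M : Matrix m n ℝ) : ℝ :=
  ∑ i, ∑ j, (M i j) ^ 2

/-- Row space of a real matrix: the span of its rows. -/
def rowSpace {m n : Type*} (M : Matrix m n ℝ) : Submodule ℝ (n → ℝ) :=
  Submodule.span ℝ (Set.range fun i => M i)

/-- Column space of a real matrix: the span of its columns. -/
def colSpace {m n : Type*} (M : Matrix m n ℝ) : Submodule ℝ (m → ℝ) :=
  Submodule.span ℝ (Set.range fun j => Mᵀ j)

/-- Squared Euclidean norm of a vector in `ℝ^d`. -/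
noncomputable def sqNorm {d : ℕ} (x : Fin d → ℝ) : ℝ := ∑ l, (x l) ^ 2

lemma frobSq_nonneg' {m n : Type*} [Fintype m] [Fintype n] (M : Matrix m n ℝ) : 0 ≤ frobSq M :=
  Finset.sum_nonneg fun _ _ => Finset.sum_nonneg fun _ _ => sq_nonneg _

lemma sqNorm_nonneg' {d : ℕ} (x : Fin d → ℝ) : 0 ≤ sqNorm x :=
  Finset.sum_nonneg fun _ _ => sq_nonneg _

lemma frobSq_sub_smul {m n : Type*} [Fintype m] [Fintype n] (X Y : Matrix m n ℝ) (t : ℝ) :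
    frobSq (X - t • Y) = frobSq X - 2*t*(∑ i, ∑ j, X i j * Y i j) + t^2 * frobSq Y := by
  have h : ∀ i j, (X i j - t * Y i j)^2
      = X i j ^2 - 2*t*(X i j * Y i j) + t^2 * Y i j ^2 := by intros; ring
  simp only [frobSq, Matrix.sub_apply, Matrix.smul_apply, smul_eq_mul, h,
    Finset.sum_add_distrib, Finset.sum_sub_distrib, ← Finset.mul_sum]

lemma frobSq_add' {m n : Type*} [Fintype m] [Fintype n] (X Y : Matrix m n ℝ) :
    frobSq (X + Y) = frobSq X + 2*(∑ i, ∑ j, X i j * Y i j) + frobSq Y := by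
  have h : ∀ i j, (X i j + Y i j)^2
      = X i j ^2 + 2*(X i j * Y i j) + Y i j ^2 := by intros; ring
  simp only [frobSq, Matrix.add_apply, h, Finset.sum_add_distrib, ← Finset.mul_sum]

lemma sqNorm_add' {d : ℕ} (x y : Fin d → ℝ) :
    sqNorm (x + y) = sqNorm x + 2*(x ⬝ᵥ y) + sqNorm y := by
  have h : ∀ l, (x l + y l)^2 = x l ^2 + 2*(x l * y l) + y l ^2 := by intros; ring
  simp only [sqNorm, Pi.add_apply, h, Finset.sum_add_distrib, ← Finset.mul_sum, dotProduct]

lemma frobSq_eq_zero_iff' {m n : Type*} [Fintype m] [Fintype n] (M : Matrix m n ℝ) :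
    frobSq M = 0 ↔ M = 0 := by
  constructor
  · intro h
    ext i j
    have h1 : ∀ i ∈ Finset.univ, (0:ℝ) ≤ ∑ j, (M i j)^2 :=
      fun _ _ => Finset.sum_nonneg fun _ _ => sq_nonneg _
    have h2 := (Finset.sum_eq_zero_iff_of_nonneg h1).1 h i (Finset.mem_univ i)
    have h3 := (Finset.sum_eq_zero_iff_of_nonneg (fun j _ => sq_nonneg (M i j))).1 h2 j
      (Finset.mem_univ j)
    simpa using pow_eq_zero_iff (n := 2) (by norm_num) |>.1 h3
  · intro h; simp [h, frobSq]

/-- First-order optimality: the residual is orthogonal to every right-perturbation of `Ak`. -/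
lemma orth_of_best {n d : ℕ} (k : ℕ)
    (A Ak : Matrix (Fin n) (Fin d) ℝ) (hAkrank : Ak.rank ≤ k)
    (hAkbest : ∀ X : Matrix (Fin n) (Fin d) ℝ, X.rank ≤ k → frobSq (A - Ak) ≤ frobSq (A - X))
    (C : Matrix (Fin d) (Fin d) ℝ) :
    ∑ i, ∑ j, (A - Ak) i j * (Ak * C) i j = 0 := by
  set N := Ak * C with hN
  set c := ∑ i, ∑ j, (A - Ak) i j * N i j with hc
  set e := frobSq N with he
  have he0 : 0 ≤ e := frobSq_nonneg' N
  have key : ∀ t : ℝ, 0 ≤ -(2*t*c) + t^2 * e := by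
    intro t
    have hr : (Ak + t • N).rank ≤ k := by
      have hfac : Ak + t • N = Ak * (1 + t • C) := by
        rw [Matrix.mul_add, Matrix.mul_one, Matrix.mul_smul]
      rw [hfac]
      exact le_trans (rank_mul_le_left _ _) hAkrank
    have h := hAkbest _ hr
    have hrw : A - (Ak + t • N) = (A - Ak) - t • N := by abel
    rw [hrw, frobSq_sub_smul] at h
    linarith
  rcases eq_or_lt_of_le he0 with h0 | hpos
  · have hN0 : N = 0 := (frobSq_eq_zero_iff' N).1 h0.symm
    simp [hc, hN0]
  · have h1 := key (c / e)
    have h2 : -(2*(c/e)*c) + (c/e)^2*e = -(c^2/e) := by field_simp; ring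
    rw [h2] at h1
    have hc2 : c^2 ≤ 0 := by
      by_contra hcon
      push_neg at hcon
      have := div_pos hcon hpos
      linarith
    nlinarith [sq_nonneg c]

lemma frobSq_le_of_rank_le {n d : ℕ} (k : ℕ) (M : Matrix (Fin n) (Fin d) ℝ) (c : ℝ) (hc : 0 ≤ c)
    (hrank : M.rank ≤ k) (hbound : ∀ v : Fin d → ℝ, sqNorm (M.mulVec v) ≤ c * sqNorm v) :
    frobSq M ≤ (k : ℝ) * c := by
  set S := Mᵀ * M with hSdef
  have hS : S.IsHermitian := isHermitian_conjTranspose_mul_self M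
  have hdot : ∀ v : Fin d → ℝ, v ⬝ᵥ (S *ᵥ v) = sqNorm (M *ᵥ v) := by
    intro v
    rw [hSdef, ← mulVec_mulVec, dotProduct_mulVec, vecMul_transpose]
    simp [sqNorm, dotProduct, sq]
  have hnorm1 : ∀ i, (⇑(hS.eigenvectorBasis i) : Fin d → ℝ) ⬝ᵥ ⇑(hS.eigenvectorBasis i) = 1 := by
    intro i
    have h := hS.eigenvectorBasis.orthonormal.1 i
    have h2 : (inner ℝ (hS.eigenvectorBasis i) (hS.eigenvectorBasis i) : ℝ) = 1 := by
      rw [real_inner_self_eq_norm_sq, h]; norm_num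
    rw [← h2]
    simp only [PiLp.inner_apply, RCLike.inner_apply, conj_trivial, dotProduct, mul_comm]
  have heig : ∀ i, 0 ≤ hS.eigenvalues i ∧ hS.eigenvalues i ≤ c := by
    intro i
    set v : Fin d → ℝ := ⇑(hS.eigenvectorBasis i) with hv
    have h1 : S *ᵥ v = hS.eigenvalues i • v := hS.mulVec_eigenvectorBasis i
    have h2 : v ⬝ᵥ (S *ᵥ v) = hS.eigenvalues i := by
      rw [h1, dotProduct_smul, smul_eq_mul, hnorm1 i, mul_one]
    have h3 : hS.eigenvalues i = sqNorm (M *ᵥ v) := by rw [← h2, hdot]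
    have h4 : sqNorm v = 1 := by
      have := hnorm1 i; simpa [sqNorm, dotProduct, sq] using this
    constructor
    · rw [h3]; exact sqNorm_nonneg' _
    · rw [h3]; calc sqNorm (M *ᵥ v) ≤ c * sqNorm v := hbound v
        _ = c := by rw [h4, mul_one]
  have htr : frobSq M = ∑ i, hS.eigenvalues i := by
    have h1 : frobSq M = S.trace := by
      simp only [frobSq, trace, diag, hSdef, mul_apply, transpose_apply, sq]
      rw [Finset.sum_comm]
    rw [h1]
    conv_lhs => rw [hS.spectral_theorem, Unitary.conjStarAlgAut_apply]
    rw [trace_mul_cycle]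
    have hU : (star (hS.eigenvectorUnitary : Matrix (Fin d) (Fin d) ℝ)) *
        (hS.eigenvectorUnitary : Matrix (Fin d) (Fin d) ℝ) = 1 := by
      exact_mod_cast Unitary.coe_star_mul_self hS.eigenvectorUnitary
    rw [hU, Matrix.one_mul, trace_diagonal]
    simp
  rw [htr]
  have hcard : (Finset.univ.filter fun i => hS.eigenvalues i ≠ 0).card ≤ k := by
    have h1 := hS.rank_eq_card_non_zero_eigs
    rw [Fintype.card_subtype] at h1
    have h2 : S.rank = M.rank := Matrix.rank_transpose_mul_self M
    omega
  calc ∑ i, hS.eigenvalues i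
      = ∑ i ∈ Finset.univ.filter (fun i => hS.eigenvalues i ≠ 0), hS.eigenvalues i := by
        rw [Finset.sum_filter_ne_zero]
    _ ≤ (Finset.univ.filter fun i => hS.eigenvalues i ≠ 0).card • c :=
        Finset.sum_le_card_nsmul _ _ c (fun i _ => (heig i).2)
    _ ≤ (k:ℝ) * c := by
        rw [nsmul_eq_mul]
        exact mul_le_mul_of_nonneg_right (by exact_mod_cast hcard) hc

theorem stmt6 {n d m : ℕ} (k : ℕ) (hk : 0 < k)
    (A Ak : Matrix (Fin n) (Fin d) ℝ)
    (hAkrank : Ak.rank ≤ k)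
    (hAkbest : ∀ X : Matrix (Fin n) (Fin d) ℝ, X.rank ≤ k → frobSq (A - Ak) ≤ frobSq (A - X))
    (η : ℝ) (hη : 0 ≤ η)
    (V : Matrix (Fin d) (Fin m) ℝ) (hV : Vᵀ * V = 1)
    -- `‖A (I - V Vᵀ)‖₂² ≤ (η/k) ‖A - A_k‖_F²`
    (hspec : ∀ v : Fin d → ℝ,
      sqNorm ((A * (1 - V * Vᵀ)).mulVec v) ≤ η / (k : ℝ) * frobSq (A - Ak) * sqNorm v) :
    frobSq (A - Ak * V * Vᵀ) ≤ (1 + η) * frobSq (A - Ak) ∧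
    (Ak * V * Vᵀ).rank ≤ k ∧ rowSpace (Ak * V * Vᵀ) ≤ colSpace V := by
  have hk0 : (k : ℝ) ≠ 0 := Nat.cast_ne_zero.2 hk.ne'
  set G := A - Ak with hG
  set M := Ak * (1 - V * Vᵀ) with hM
  set F := frobSq G with hF
  have hF0 : 0 ≤ F := frobSq_nonneg' G
  -- cross term vanishes
  have cross1 : ∑ i, ∑ j, G i j * M i j = 0 :=
    orth_of_best k A Ak hAkrank hAkbest (1 - V * Vᵀ)
  -- decomposition
  have hsplit : A - Ak * V * Vᵀ = G + M := by
    rw [hG, hM, Matrix.mul_sub, Matrix.mul_one, ← Matrix.mul_assoc]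
    abel
  have hpyth : frobSq (A - Ak * V * Vᵀ) = F + frobSq M := by
    rw [hsplit, frobSq_add', cross1]
    ring
  -- pointwise orthogonality of residual against Ak
  have cross2 : ∀ u : Fin d → ℝ, (G *ᵥ u) ⬝ᵥ (Ak *ᵥ u) = 0 := by
    intro u
    have h := orth_of_best k A Ak hAkrank hAkbest (vecMulVec u u)
    have heq : (G *ᵥ u) ⬝ᵥ (Ak *ᵥ u) = ∑ i, ∑ j, G i j * (Ak * vecMulVec u u) i j := by
      simp only [dotProduct, mulVec, Matrix.mul_apply, vecMulVec_apply]
      apply Finset.sum_congr rfl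
      intro i _
      rw [Finset.sum_mul]
      apply Finset.sum_congr rfl
      intro j _
      rw [Finset.mul_sum, Finset.mul_sum]
      apply Finset.sum_congr rfl
      intro l _
      ring
    rw [heq, h]
  -- spectral-type bound transfers from A to Ak
  have hMx : ∀ x : Fin d → ℝ, sqNorm (M *ᵥ x) ≤ (η / (k:ℝ) * F) * sqNorm x := by
    intro x
    set u : Fin d → ℝ := (1 - V * Vᵀ) *ᵥ x with hu
    have hMu : M *ᵥ x = Ak *ᵥ u := by rw [hM, hu, mulVec_mulVec]
    have hAu : (A * (1 - V * Vᵀ)) *ᵥ x = A *ᵥ u := by rw [hu, mulVec_mulVec]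
    have hsum : A *ᵥ u = G *ᵥ u + Ak *ᵥ u := by
      rw [hG, ← Matrix.add_mulVec, sub_add_cancel]
    have hle : sqNorm (Ak *ᵥ u) ≤ sqNorm (A *ᵥ u) := by
      rw [hsum, sqNorm_add', cross2 u]
      have := sqNorm_nonneg' (G *ᵥ u)
      linarith
    calc sqNorm (M *ᵥ x) = sqNorm (Ak *ᵥ u) := by rw [hMu]
      _ ≤ sqNorm (A *ᵥ u) := hle
      _ = sqNorm ((A * (1 - V * Vᵀ)) *ᵥ x) := by rw [hAu]
      _ ≤ η / (k:ℝ) * F * sqNorm x := hspec x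
  -- Frobenius bound on M via rank
  have hMrank : M.rank ≤ k := le_trans (rank_mul_le_left _ _) hAkrank
  have hc0 : 0 ≤ η / (k:ℝ) * F :=
    mul_nonneg (div_nonneg hη (Nat.cast_nonneg k)) hF0
  have hfM : frobSq M ≤ (k:ℝ) * (η / (k:ℝ) * F) :=
    frobSq_le_of_rank_le k M _ hc0 hMrank hMx
  have hfM' : frobSq M ≤ η * F := by
    have : (k:ℝ) * (η / (k:ℝ) * F) = η * F := by field_simp
    linarith [hfM, this ▸ hfM]
  refine ⟨?_, ?_, ?_⟩
  · rw [hpyth]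
    linarith
  · exact le_trans (rank_mul_le_left _ _) (le_trans (rank_mul_le_left _ _) hAkrank)
  · rw [rowSpace]
    apply Submodule.span_le.2
    rintro _ ⟨i, rfl⟩
    have hrow : (Ak * V * Vᵀ) i = ∑ l, (Ak * V) i l • Vᵀ l := by
      ext j
      simp only [Matrix.mul_apply, Finset.sum_apply, Pi.smul_apply, smul_eq_mul]
    show (Ak * V * Vᵀ) i ∈ colSpace V
    rw [hrow]
    exact Submodule.sum_mem _ fun l _ =>
      Submodule.smul_mem _ _ (Submodule.subset_span ⟨l, rfl⟩)
end

section
/- Let A ∈ ℝ^{n×d}, let j be a positive integer, let η ≥ 0, and let V ∈ ℝ^{d×m} have orthonormal columns such that ‖A(I − VVᵀ)‖₂² ≤ (η/j)·‖A − A_j‖_F². Set Ã = AVVᵀ. Let X ∈ ℝ^{d×j} have orthonormal columns and let Y ∈ ℝ^{d×(d−j)} have orthonormal columns spanning the orthogonal complement of col(X). Then ‖A X Xᵀ − Ã X Xᵀ‖_F² ≤ η · ‖AY‖_F². -/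
open Matrix

lemma frobSq_eq_trace {p q : Type*} [Fintype p] [Fintype q] (M : Matrix p q ℝ) :
    frobSq M = Matrix.trace (M * Mᵀ) := by
  simp [frobSq, Matrix.trace, Matrix.mul_apply, Matrix.diag, sq]

lemma frobSq_mul_orth {p q r : Type*} [Fintype p] [Fintype q] [Fintype r] [DecidableEq q]
    (M : Matrix p q ℝ) (N : Matrix r q ℝ) (hN : Nᵀ * N = 1) :
    frobSq (M * Nᵀ) = frobSq M := by
  rw [frobSq_eq_trace, frobSq_eq_trace, Matrix.transpose_mul, Matrix.transpose_transpose,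
    Matrix.mul_assoc, ← Matrix.mul_assoc Nᵀ, hN, Matrix.one_mul]

theorem stmt7 {n d m : ℕ} (j : ℕ) (hj : 0 < j)
    (A Aj : Matrix (Fin n) (Fin d) ℝ)
    (hAjrank : Aj.rank ≤ j)
    (hAjbest : ∀ X : Matrix (Fin n) (Fin d) ℝ, X.rank ≤ j → frobSq (A - Aj) ≤ frobSq (A - X))
    (η : ℝ) (hη : 0 ≤ η)
    (V : Matrix (Fin d) (Fin m) ℝ) (hV : Vᵀ * V = 1)
    -- `‖A (I - V Vᵀ)‖₂² ≤ (η/j) ‖A - A_j‖_F²`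
    (hspec : ∀ v : Fin d → ℝ,
      sqNorm ((A * (1 - V * Vᵀ)).mulVec v) ≤ η / (j : ℝ) * frobSq (A - Aj) * sqNorm v)
    -- `X` has orthonormal columns, `Y` has orthonormal columns spanning `col(X)ᗮ`
    (X : Matrix (Fin d) (Fin j) ℝ) (Y : Matrix (Fin d) (Fin (d - j)) ℝ)
    (hX : Xᵀ * X = 1) (hY : Yᵀ * Y = 1) (hXY : X * Xᵀ + Y * Yᵀ = 1) :
    frobSq (A * X * Xᵀ - A * V * Vᵀ * X * Xᵀ) ≤ η * frobSq (A * Y) := by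
  set B := A * (1 - V * Vᵀ) with hB
  set F := frobSq (A - Aj) with hF
  -- rewrite the LHS
  have hBX : A * X * Xᵀ - A * V * Vᵀ * X * Xᵀ = (B * X) * Xᵀ := by
    simp [hB, Matrix.mul_sub, Matrix.sub_mul, Matrix.mul_one, Matrix.mul_assoc]
  rw [hBX, frobSq_mul_orth _ _ hX]
  -- bound frobSq (B * X)
  have hcol : ∀ c : Fin j, sqNorm (fun l => X l c) = 1 := by
    intro c
    have := congrFun (congrFun hX c) c
    simpa [sqNorm, Matrix.mul_apply, Matrix.one_apply, sq] using this
  have hBXsum : frobSq (B * X) = ∑ c, sqNorm (B.mulVec (fun l => X l c)) := by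
    rw [frobSq, Finset.sum_comm]
    simp [sqNorm, Matrix.mulVec, Matrix.mul_apply, dotProduct]
  have key : frobSq (B * X) ≤ η / (j : ℝ) * F * j := by
    rw [hBXsum]
    calc ∑ c, sqNorm (B.mulVec (fun l => X l c))
        ≤ ∑ c : Fin j, η / (j : ℝ) * F * sqNorm (fun l => X l c) := by
          apply Finset.sum_le_sum
          intro c _
          exact hspec _
      _ = η / (j : ℝ) * F * j := by
          simp [hcol]; ring
  have hj' : (0 : ℝ) < j := by exact_mod_cast hj
  have key2 : η / (j : ℝ) * F * j = η * F := by
    field_simp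
  -- F ≤ frobSq (A * Y)
  have hrank : (A * X * Xᵀ).rank ≤ j := by
    calc (A * X * Xᵀ).rank ≤ (Xᵀ).rank := Matrix.rank_mul_le_right _ _
      _ ≤ Fintype.card (Fin j) := Matrix.rank_le_card_height _
      _ = j := Fintype.card_fin j
  have hsub : A - A * X * Xᵀ = (A * Y) * Yᵀ := by
    have h1 : Y * Yᵀ = 1 - X * Xᵀ := by
      rw [← hXY]; abel
    rw [Matrix.mul_assoc A Y, h1, Matrix.mul_sub, Matrix.mul_one, Matrix.mul_assoc]
  have hFY : F ≤ frobSq (A * Y) := by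
    have := hAjbest (A * X * Xᵀ) hrank
    rwa [hsub, frobSq_mul_orth _ _ hY] at this
  calc frobSq (B * X) ≤ η / (j : ℝ) * F * j := key
    _ = η * F := key2
    _ ≤ η * frobSq (A * Y) := by
        exact mul_le_mul_of_nonneg_left hFY hη
end
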